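/- The subgroup G = ⟨γ₁, γ₂, γ₃⟩ of PSL₂(ℤ) generated by γ₁ = [[-1,2],[-1,1]], γ₂ = [[1,-1],[2,-1]], γ₃ = [[0,1],[-1,0]] intersects the group B of upper triangular unipotent matrices {[[1,n],[0,1]] : n ∈ ℤ} exactly in the cyclic subgroup {[[1,3n],[0,1]] : n ∈ ℤ} generated by γ₁γ₂γ₃. -/

import Mathlib

open Matrix

abbrev SL2Z := Matrix.SpecialLinearGroup (Fin 2) ℤ
abbrev PSL2Z := SL2Z ⧸ Subgroup.center SL2Z

def γ₁ : SL2Z := ⟨!![-1, 2; -1, 1], by norm_num [Matrix.det_fin_two_of]⟩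
def γ₂ : SL2Z := ⟨!![1, -1; 2, -1], by norm_num [Matrix.det_fin_two_of]⟩
def γ₃ : SL2Z := ⟨!![0, 1; -1, 0], by norm_num [Matrix.det_fin_two_of]⟩
def T₁ : SL2Z := ⟨!![1, 1; 0, 1], by norm_num [Matrix.det_fin_two_of]⟩
def T₃ : SL2Z := ⟨!![1, 3; 0, 1], by norm_num [Matrix.det_fin_two_of]⟩

noncomputable def π : SL2Z →* PSL2Z := QuotientGroup.mk' (Subgroup.center SL2Z)

abbrev SL2Z3 := Matrix.SpecialLinearGroup (Fin 2) (ZMod 3)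

def Q8m : List (Matrix (Fin 2) (Fin 2) (ZMod 3)) :=
  [!![1,0;0,1], !![2,0;0,2], !![0,1;2,0], !![0,2;1,0],
   !![1,1;1,2], !![2,2;2,1], !![1,2;2,2], !![2,1;1,1]]

def φfun (g : SL2Z3) : ZMod 3 :=
  if g.1 ∈ Q8m then 0 else if g.1 * !![1,2;0,1] ∈ Q8m then 1 else 2

set_option maxHeartbeats 4000000 in
def φ₀ : SL2Z3 →* Multiplicative (ZMod 3) :=
  MonoidHom.mk' (fun g => Multiplicative.ofAdd (φfun g)) (by decide)

def ψ : SL2Z →* Multiplicative (ZMod 3) :=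
  φ₀.comp (Matrix.SpecialLinearGroup.map (Int.castRingHom (ZMod 3)))

lemma hψγ₁ : ψ γ₁ = 1 := by decide
lemma hψγ₂ : ψ γ₂ = 1 := by decide
lemma hψγ₃ : ψ γ₃ = 1 := by decide
lemma hψT₁ : ψ T₁ = Multiplicative.ofAdd (1 : ZMod 3) := by decide
lemma hψneg1 : ψ (-1 : SL2Z) = 1 := by decide

lemma hcenter : Subgroup.center SL2Z ≤ ψ.ker := by
  intro z hz
  obtain ⟨r, hr, hrz⟩ := Matrix.SpecialLinearGroup.mem_center_iff.mp hz
  have hru : IsUnit r := IsUnit.of_mul_eq_one r (by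
    have : r ^ 2 = 1 := by simpa using hr
    simpa [sq] using this)
  rcases Int.isUnit_iff.mp hru with h1 | h1
  · have hz1 : z = 1 := by
      ext i j
      have := congrArg (fun M => M i j) hrz
      simp [h1] at this
      simpa using this.symm
    rw [MonoidHom.mem_ker, hz1]
    exact _root_.map_one ψ
  · have hz1 : z = -1 := by
      ext i j
      have := congrArg (fun M => M i j) hrz
      simp [h1] at this
      simp [← this]
    rw [MonoidHom.mem_ker, hz1]
    exact hψneg1

noncomputable def Ψ : PSL2Z →* Multiplicative (ZMod 3) :=
  QuotientGroup.lift (Subgroup.center SL2Z) ψ hcenter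

lemma Ψπ (x : SL2Z) : Ψ (π x) = ψ x := rfl

lemma T₁_cube : T₁ ^ 3 = T₃ := by
  ext i j
  rw [Matrix.SpecialLinearGroup.coe_pow]
  fin_cases i <;> fin_cases j <;>
    simp [T₁, T₃, pow_succ, Matrix.mul_apply, Fin.sum_univ_succ]

lemma T₃_eq : T₃ = γ₁ * γ₂ * γ₃ := by
  ext i j
  rw [Matrix.SpecialLinearGroup.coe_mul, Matrix.SpecialLinearGroup.coe_mul]
  fin_cases i <;> fin_cases j <;>
    simp [T₃, γ₁, γ₂, γ₃, Matrix.mul_apply, Fin.sum_univ_succ]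

theorem stmt_11 :
    Subgroup.closure {π γ₁, π γ₂, π γ₃} ⊓ Subgroup.zpowers (π T₁) =
      Subgroup.zpowers (π T₃) := by
  apply le_antisymm
  · rintro x ⟨hxG, hxB⟩
    obtain ⟨n, rfl⟩ := Subgroup.mem_zpowers_iff.mp hxB
    have hker : Subgroup.closure {π γ₁, π γ₂, π γ₃} ≤ Ψ.ker := by
      rw [Subgroup.closure_le]
      rintro g (rfl | rfl | rfl) <;>
        simp [SetLike.mem_coe, MonoidHom.mem_ker, Ψπ, hψγ₁, hψγ₂, hψγ₃]
    have h0 : Ψ ((π T₁) ^ n) = 1 := hker hxG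
    rw [map_zpow, Ψπ, hψT₁] at h0
    have h1 : ((n : ℤ) : ZMod 3) = 0 := by
      have := congrArg Multiplicative.toAdd h0
      simpa [toAdd_zpow, zsmul_eq_mul] using this
    obtain ⟨m, rfl⟩ := (ZMod.intCast_zmod_eq_zero_iff_dvd n 3).mp h1
    refine Subgroup.mem_zpowers_iff.mpr ⟨m, ?_⟩
    rw [← map_zpow, ← map_zpow]
    congr 1
    rw [← T₁_cube, ← zpow_natCast T₁ 3, ← _root_.zpow_mul]
  · rw [Subgroup.zpowers_le]
    have h1 : π T₃ ∈ Subgroup.closure {π γ₁, π γ₂, π γ₃} := by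
      rw [T₃_eq, _root_.map_mul, _root_.map_mul]
      exact mul_mem (mul_mem (Subgroup.subset_closure (by simp))
        (Subgroup.subset_closure (by simp))) (Subgroup.subset_closure (by simp))
    have h2 : π T₃ ∈ Subgroup.zpowers (π T₁) := by
      refine Subgroup.mem_zpowers_iff.mpr ⟨3, ?_⟩
      rw [← map_zpow]
      congr 1
      rw [← T₁_cube, ← zpow_natCast T₁ 3]
      norm_num
    exact ⟨h1, h2⟩
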